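/- arXiv:1807.10217 — 8 statements merged into one kernel-verified Lean document; each statement's English description precedes it below -/
import Mathlib

section
/- The map ν from triangular arrays to B(w), defined by ν(Y)_{ij} = y_{i,j-i+1} - y_{i-1,j-i+2} (with the second term 0 when i = 1), is a well-defined bijection from P(w) to B(w), with inverse given by ν̄(b)_{ij} = Σ_{1 ≤ h ≤ i} b_{h,i+j-1}. -/
open scoped BigOperators Classical

noncomputable section

/-- A triangular array of size `n`: entries `y i j` for `1 ≤ i ≤ n`, `1 ≤ j ≤ n - i + 1`
(zero outside this range), weakly decreasing along ladders: `y (i-1) (j+1) ≤ y i j`. -/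
def IsTri (n : ℕ) (y : ℕ → ℕ → ℕ) : Prop :=
  (∀ i j, ¬(1 ≤ i ∧ i ≤ n ∧ 1 ≤ j ∧ j ≤ n - i + 1) → y i j = 0) ∧
  (∀ i j, 2 ≤ i → i ≤ n → 1 ≤ j → j ≤ n - i + 1 → y (i - 1) (j + 1) ≤ y i j)

/-- The dimension vector of a triangular array: the `i`-th chute sum. -/
def udim (n : ℕ) (y : ℕ → ℕ → ℕ) (i : ℕ) : ℕ := ∑ j ∈ Finset.Icc 1 (n - i + 1), y i j

/-- The set `P(w)` of triangular arrays of size `n` with dimension vector `w`. -/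
def InP (n : ℕ) (w : ℕ → ℕ) (y : ℕ → ℕ → ℕ) : Prop :=
  IsTri n y ∧ ∀ i, 1 ≤ i → i ≤ n → udim n y i = w i

/-- The set `B(w)`: families `(b i j)` for `1 ≤ i ≤ j ≤ n` (zero outside) with
`∑ b i j • γ_{ij} = w`, i.e. for each `1 ≤ k ≤ n`, `∑_{i ≤ k ≤ j} b i j = w k`. -/
def InB (n : ℕ) (w : ℕ → ℕ) (b : ℕ → ℕ → ℕ) : Prop :=
  (∀ i j, ¬(1 ≤ i ∧ i ≤ j ∧ j ≤ n) → b i j = 0) ∧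
  ∀ k, 1 ≤ k → k ≤ n → (∑ i ∈ Finset.Icc 1 k, ∑ j ∈ Finset.Icc k n, b i j) = w k

/-- The map `ν : P(w) → B(w)`. -/
def nuMap (n : ℕ) (y : ℕ → ℕ → ℕ) : ℕ → ℕ → ℕ := fun i j =>
  if 1 ≤ i ∧ i ≤ j ∧ j ≤ n then y i (j - i + 1) - y (i - 1) (j - i + 2) else 0

/-- The map `ν̄ : B(w) → P(w)`. -/
def nubarMap (n : ℕ) (b : ℕ → ℕ → ℕ) : ℕ → ℕ → ℕ := fun i j =>
  if 1 ≤ i ∧ i ≤ n ∧ 1 ≤ j ∧ j ≤ n - i + 1 then ∑ h ∈ Finset.Icc 1 i, b h (i + j - 1) else 0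

/-- `Raise Y i j` increments the entry in chute `i`, column `j`. -/
def Raise (y : ℕ → ℕ → ℕ) (i j : ℕ) : ℕ → ℕ → ℕ := fun p q =>
  if p = i ∧ q = j then y p q + 1 else y p q

/-- `Lower Y i j` decrements the entry in chute `i`, column `j`. -/
def Lower (y : ℕ → ℕ → ℕ) (i j : ℕ) : ℕ → ℕ → ℕ := fun p q =>
  if p = i ∧ q = j then y p q - 1 else y p q

/-- `K_i(Y,k) = max({1} ∪ {j : 2 ≤ j ≤ k, y i j < y (i+1) (j-1)})`. -/
def Kval (y : ℕ → ℕ → ℕ) (i k : ℕ) : ℕ :=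
  ((Finset.Icc 2 k).filter (fun j => y i j < y (i + 1) (j - 1))).sup id ⊔ 1

/-- Procedure `a`: `a(Y,i,k) = (Raise(Y,i,K_i(Y,k)), i-1, K_i(Y,k))`. -/
def aStep (t : (ℕ → ℕ → ℕ) × ℕ × ℕ) : (ℕ → ℕ → ℕ) × ℕ × ℕ :=
  (Raise t.1 t.2.1 (Kval t.1 t.2.1 t.2.2), t.2.1 - 1, Kval t.1 t.2.1 t.2.2)

/-- Procedure `A_i`: apply `a` exactly `i` times starting from `(Y, i, n - i + 1)`. -/
def Aproc (n i : ℕ) (y : ℕ → ℕ → ℕ) : ℕ → ℕ → ℕ := (aStep^[i] (y, i, n - i + 1)).1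

/-- `Del↘(Y)` : delete the first chute. -/
def delChute (y : ℕ → ℕ → ℕ) : ℕ → ℕ → ℕ := fun i j =>
  if 1 ≤ i ∧ 1 ≤ j then y (i + 1) j else 0

/-- `Y ∪↘ Q` : adjoin `Q` as the new topmost chute. -/
def adjChute (y : ℕ → ℕ → ℕ) (q : ℕ → ℕ) : ℕ → ℕ → ℕ := fun i j =>
  if i = 0 then 0 else if i = 1 then q j else y (i - 1) j

/-- The set whose infimum is `I(Y,k)`; `I(Y,k) < ∞` iff this set is nonempty. -/
def Iset (n : ℕ) (y : ℕ → ℕ → ℕ) (k : ℕ) : Set ℕ := {j | k ≤ j ∧ j ≤ n ∧ 0 < y 1 j}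

/-- `I(Y,k)`: the smallest `j ≥ k` with `y 1 j > 0`. -/
def Idef (n : ℕ) (y : ℕ → ℕ → ℕ) (k : ℕ) : ℕ := sInf (Iset n y k)

/-- The set whose infimum is `J(Y,k)`; `J(Y,k) < ∞` iff this set is nonempty. -/
def Jset (n : ℕ) (y : ℕ → ℕ → ℕ) (k : ℕ) : Set ℕ :=
  {j | Idef n y k < j ∧ j ≤ n ∧ y 1 j < y 2 (j - 1)}

/-- `J(Y,k)`: the smallest `j > I(Y,k)` with `y 1 j < y 2 (j-1)`. -/
def Jdef (n : ℕ) (y : ℕ → ℕ → ℕ) (k : ℕ) : ℕ := sInf (Jset n y k)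

/-- Procedure `B`, by induction on the size `n`. -/
def Bproc : ℕ → (ℕ → ℕ → ℕ) → ℕ → ((ℕ → ℕ → ℕ) × ℕ)
  | 0, y, _ => (y, 1)
  | n + 1, y, k =>
    if (Jset (n + 1) y k).Nonempty then
      let zr := Bproc n (delChute y) (Jdef (n + 1) y k - 1)
      (Lower (adjChute zr.1 (y 1)) 1 (Idef (n + 1) y k), zr.2 + 1)
    else (Lower y 1 (Idef (n + 1) y k), 1)

/-- Apply `A_m^{y_{N+1-m,m} - y_{N-m,m+1}}` for `m = 1, …, M` (innermost `A_1`). -/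
def applyAs (N : ℕ) (y : ℕ → ℕ → ℕ) : ℕ → (ℕ → ℕ → ℕ) → (ℕ → ℕ → ℕ)
  | 0, z => z
  | m + 1, z => (Aproc N (m + 1))^[y (N - m) (m + 1) - y (N - m - 1) (m + 2)] (applyAs N y m z)

/-- `Del↗(Y)` : delete the last ladder (of an array of size `n`). -/
def delLadder (n : ℕ) (y : ℕ → ℕ → ℕ) : ℕ → ℕ → ℕ := fun i j =>
  if 1 ≤ i ∧ 1 ≤ j ∧ i + j ≤ n then y i j else 0

/-- The combinatorial Fourier transform `T`. -/
def Tmap : ℕ → (ℕ → ℕ → ℕ) → (ℕ → ℕ → ℕ)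
  | 0, y => y
  | 1, y => y
  | n + 2, y =>
      applyAs (n + 2) y (n + 2) (adjChute (Tmap (n + 1) (delLadder (n + 2) y)) (fun _ => 0))

/-- Iterate procedure `B` (with `k = 1`), recording the list of produced integers `q`. -/
def Biter (n : ℕ) (y : ℕ → ℕ → ℕ) : ℕ → ((ℕ → ℕ → ℕ) × List ℕ)
  | 0 => (y, [])
  | m + 1 =>
    let p := Biter n y m
    let b := Bproc n p.1 1
    (b.1, p.2 ++ [b.2])

/-- `Y ∪↗ P` : adjoin `P` as the new bottommost ladder (result of size `N`). -/
def adjLadder (N : ℕ) (z : ℕ → ℕ → ℕ) (p : ℕ → ℕ) : ℕ → ℕ → ℕ := fun i j =>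
  if 1 ≤ i ∧ 1 ≤ j ∧ i + j = N + 1 then p j else z i j

/-- The inverse combinatorial Fourier transform `T'`. -/
def Tinv : ℕ → (ℕ → ℕ → ℕ) → (ℕ → ℕ → ℕ)
  | 0, y => y
  | 1, y => y
  | n + 2, y =>
    let r := Biter (n + 2) y (udim (n + 2) y 1)
    adjLadder (n + 2) (Tinv (n + 1) (delChute r.1)) (fun j => r.2.countP (fun q => decide (j ≤ q)))

/-- The composition `x_{i+j-1} ∘ ⋯ ∘ x_{i+1} ∘ x_i` (`j` maps, starting at vertex `i`). -/
def chainMap (w : ℕ → ℕ) (x : ∀ m : ℕ, (Fin (w m) → ℂ) →ₗ[ℂ] (Fin (w (m + 1)) → ℂ)) (i : ℕ) :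
    ∀ j : ℕ, (Fin (w i) → ℂ) →ₗ[ℂ] (Fin (w (i + j)) → ℂ)
  | 0 => LinearMap.id
  | j + 1 => (x (i + j)).comp (chainMap w x i j)

/-- `u` is a Jordan basis of type `Y` for the representation `x`. -/
def IsJordanBasis (n : ℕ) (w : ℕ → ℕ) (y : ℕ → ℕ → ℕ)
    (x : ∀ m : ℕ, (Fin (w m) → ℂ) →ₗ[ℂ] (Fin (w (m + 1)) → ℂ))
    (u : ∀ m : ℕ, ℕ → ℕ → (Fin (w m) → ℂ)) : Prop :=
  (∀ i, 1 ≤ i → i ≤ n →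
    (LinearIndependent ℂ
      (fun p : {p : ℕ × ℕ // 1 ≤ p.1 ∧ p.1 ≤ n - i + 1 ∧ 1 ≤ p.2 ∧ p.2 ≤ y i p.1} =>
        u i p.1.1 p.1.2) ∧
    Submodule.span ℂ
      (Set.range (fun p : {p : ℕ × ℕ // 1 ≤ p.1 ∧ p.1 ≤ n - i + 1 ∧ 1 ≤ p.2 ∧ p.2 ≤ y i p.1} =>
        u i p.1.1 p.1.2)) = ⊤)) ∧
  (∀ i j k, 1 ≤ i → i + 1 ≤ n → 1 ≤ j → j ≤ n - i + 1 → 1 ≤ k → k ≤ y i j →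
    x i (u i j k) = if 2 ≤ j then u (i + 1) (j - 1) k else 0)

/-- `V` is a kernel flag of type `Y` (with the convention `V i 0 = ⊥`). -/
def IsKerFlag (n : ℕ) (w : ℕ → ℕ) (y : ℕ → ℕ → ℕ)
    (V : ∀ i : ℕ, ℕ → Submodule ℂ (Fin (w i) → ℂ)) : Prop :=
  ∀ i, 1 ≤ i → i ≤ n →
    V i 0 = ⊥ ∧
    (∀ j, j ≤ n - i → V i j ≤ V i (j + 1)) ∧
    V i (n - i + 1) = ⊤ ∧
    (∀ j, 1 ≤ j → j ≤ n - i + 1 → Module.finrank ℂ (V i j) = ∑ h ∈ Finset.Icc 1 j, y i h)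

/-- The representation `x` preserves the kernel flag `V`. -/
def PreservesFlag (n : ℕ) (w : ℕ → ℕ)
    (x : ∀ m : ℕ, (Fin (w m) → ℂ) →ₗ[ℂ] (Fin (w (m + 1)) → ℂ))
    (V : ∀ i : ℕ, ℕ → Submodule ℂ (Fin (w i) → ℂ)) : Prop :=
  ∀ i, 1 ≤ i → i + 1 ≤ n → ∀ j, 1 ≤ j → j ≤ n - i + 1 → ∀ v ∈ V i j,
    (j = 1 → x i v = 0) ∧ (2 ≤ j → x i v ∈ V (i + 1) (j - 1))

/-- The flag of kernels `V i j = ker (x_{i+j-1} ∘ ⋯ ∘ x_i)`. -/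
def kerFlag (w : ℕ → ℕ) (x : ∀ m : ℕ, (Fin (w m) → ℂ) →ₗ[ℂ] (Fin (w (m + 1)) → ℂ)) :
    ∀ i : ℕ, ℕ → Submodule ℂ (Fin (w i) → ℂ) := fun i j => LinearMap.ker (chainMap w x i j)

/-- The Lie-algebra stabilizer of the flag `V` inside `𝔤(w) = ∏ End(ℂ^{w_i})`. -/
def stabFlagSub (n : ℕ) (w : ℕ → ℕ) (V : ∀ i : ℕ, ℕ → Submodule ℂ (Fin (w i) → ℂ)) :
    Submodule ℂ (∀ i : Fin n, (Fin (w (i.val + 1)) → ℂ) →ₗ[ℂ] (Fin (w (i.val + 1)) → ℂ)) where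
  carrier := {g | ∀ (i : Fin n) (j : ℕ), 1 ≤ j → j ≤ n - (i.val + 1) + 1 →
    ∀ v ∈ V (i.val + 1) j, g i v ∈ V (i.val + 1) j}
  add_mem' := by
    intro a b ha hb i j h1 h2 v hv
    simpa using (V (i.val + 1) j).add_mem (ha i j h1 h2 v hv) (hb i j h1 h2 v hv)
  zero_mem' := by
    intro i j h1 h2 v hv
    simpa using (V (i.val + 1) j).zero_mem
  smul_mem' := by
    intro c a ha i j h1 h2 v hv
    simpa using (V (i.val + 1) j).smul_mem c (ha i j h1 h2 v hv)

/-- The linear space `E(w)^V` of representations preserving the kernel flag `V`. -/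
def presFlagSub (n : ℕ) (w : ℕ → ℕ) (V : ∀ i : ℕ, ℕ → Submodule ℂ (Fin (w i) → ℂ)) :
    Submodule ℂ (∀ i : Fin (n - 1), (Fin (w (i.val + 1)) → ℂ) →ₗ[ℂ] (Fin (w (i.val + 2)) → ℂ)) where
  carrier := {x | ∀ (i : Fin (n - 1)) (j : ℕ), 1 ≤ j → j ≤ n - (i.val + 1) + 1 →
    ∀ v ∈ V (i.val + 1) j,
      (j = 1 → x i v = 0) ∧ (2 ≤ j → x i v ∈ V (i.val + 2) (j - 1))}
  add_mem' := by
    intro a b ha hb i j h1 h2 v hv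
    obtain ⟨ha1, ha2⟩ := ha i j h1 h2 v hv
    obtain ⟨hb1, hb2⟩ := hb i j h1 h2 v hv
    constructor
    · intro hj
      simp [ha1 hj, hb1 hj]
    · intro hj
      simpa using (V (i.val + 2) (j - 1)).add_mem (ha2 hj) (hb2 hj)
  zero_mem' := by
    intro i j h1 h2 v hv
    constructor
    · intro _; simp
    · intro _
      simpa using (V (i.val + 2) (j - 1)).zero_mem
  smul_mem' := by
    intro c a ha i j h1 h2 v hv
    obtain ⟨ha1, ha2⟩ := ha i j h1 h2 v hv
    constructor
    · intro hj
      simp [ha1 hj]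
    · intro hj
      simpa using (V (i.val + 2) (j - 1)).smul_mem c (ha2 hj)

end


lemma sum_shift (k m : ℕ) (hk : 1 ≤ k) (f : ℕ → ℕ) :
    ∑ j ∈ Finset.Icc 1 m, f (k + j - 1) = ∑ c ∈ Finset.Icc k (k + m - 1), f c := by
  refine Finset.sum_nbij' (fun j => k + j - 1) (fun c => c - k + 1) ?_ ?_ ?_ ?_ ?_ <;>
    simp only [Finset.mem_Icc] <;> intro a ha
  · omega
  · omega
  · omega
  · omega
  · trivial

lemma sum_nu_eq {n : ℕ} {y : ℕ → ℕ → ℕ} (hy : IsTri n y) :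
    ∀ i c, 1 ≤ i → i ≤ c → c ≤ n → ∑ h ∈ Finset.Icc 1 i, nuMap n y h c = y i (c - i + 1) := by
  intro i
  induction i with
  | zero => intro c h; omega
  | succ i ih =>
    intro c h1 h2 h3
    rcases Nat.eq_zero_or_pos i with hi | hi
    · subst hi
      simp only [Nat.zero_add]
      rw [show Finset.Icc 1 1 = {1} from rfl, Finset.sum_singleton, nuMap,
        if_pos ⟨le_refl 1, by omega, h3⟩]
      have h0 : y (1 - 1) (c - 1 + 2) = 0 := hy.1 0 (c - 1 + 2) (by omega)
      simp only [show (1:ℕ) - 1 = 0 from rfl] at h0 ⊢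
      omega
    · rw [Finset.sum_Icc_succ_top (by omega), ih c hi (by omega) h3, nuMap,
        if_pos ⟨by omega, h2, h3⟩]
      have e1 : c - (i + 1) + 1 = c - i := by omega
      have e2 : c - (i + 1) + 2 = c - i + 1 := by omega
      have e3 : i + 1 - 1 = i := by omega
      rw [e1, e2, e3]
      have hmono := hy.2 (i + 1) (c - i) (by omega) (by omega) (by omega) (by omega)
      rw [e3] at hmono
      omega

lemma nubar_eval {n : ℕ} (b : ℕ → ℕ → ℕ) {i j : ℕ} (h1 : 1 ≤ i) (h2 : i ≤ n) (h3 : 1 ≤ j)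
    (h4 : j ≤ n - i + 1) :
    nubarMap n b i j = ∑ h ∈ Finset.Icc 1 i, b h (i + j - 1) := by
  simp only [nubarMap]; rw [if_pos ⟨h1, h2, h3, h4⟩]

/-- `ν : P(w) → B(w)` is a well-defined bijection, with inverse `ν̄`. -/
theorem nu_bijection (n : ℕ) (hn : 1 ≤ n) (w : ℕ → ℕ) :
    (∀ y : ℕ → ℕ → ℕ, InP n w y → InB n w (nuMap n y) ∧ nubarMap n (nuMap n y) = y) ∧
    (∀ b : ℕ → ℕ → ℕ, InB n w b → InP n w (nubarMap n b) ∧ nuMap n (nubarMap n b) = b) := by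
  constructor
  · intro y hy
    obtain ⟨hytri, hydim⟩ := hy
    constructor
    · constructor
      · intro i j hij
        simp only [nuMap, if_neg hij]
      · intro k hk1 hk2
        rw [← hydim k hk1 hk2]
        simp only [udim]
        rw [Finset.sum_comm]
        have h1 : ∀ j ∈ Finset.Icc k n,
            ∑ i ∈ Finset.Icc 1 k, nuMap n y i j = y k (j - k + 1) := by
          intro j hj
          rw [Finset.mem_Icc] at hj
          exact sum_nu_eq hytri k j hk1 hj.1 hj.2
        rw [Finset.sum_congr rfl h1]
        refine Finset.sum_nbij' (fun j => j - k + 1) (fun j => k + j - 1) ?_ ?_ ?_ ?_ ?_ <;>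
          simp only [Finset.mem_Icc] <;> intro a ha
        · omega
        · omega
        · omega
        · omega
        · trivial
    · funext i j
      by_cases h : 1 ≤ i ∧ i ≤ n ∧ 1 ≤ j ∧ j ≤ n - i + 1
      · simp only [nubarMap, if_pos h]
        rw [sum_nu_eq hytri i (i + j - 1) h.1 (by omega) (by omega)]
        congr 1
        omega
      · simp only [nubarMap, if_neg h]
        exact (hytri.1 i j h).symm
  · intro b hb
    obtain ⟨hbsupp, hbsum⟩ := hb
    constructor
    · constructor
      · constructor
        · intro i j hij
          simp only [nubarMap, if_neg hij]
        · intro i j h2 hin hj1 hj2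
          have hA : nubarMap n b (i - 1) (j + 1) = ∑ h ∈ Finset.Icc 1 (i - 1), b h (i + j - 1) := by
            rw [nubar_eval b (by omega) (by omega) (by omega) (by omega)]
            refine Finset.sum_congr rfl fun h' _ => ?_
            congr 1
            omega
          have hB : nubarMap n b i j = ∑ h ∈ Finset.Icc 1 i, b h (i + j - 1) :=
            nubar_eval b (by omega) hin hj1 hj2
          rw [hA, hB]
          exact Finset.sum_le_sum_of_subset (Finset.Icc_subset_Icc_right (by omega))
      · intro i h1 h2
        have e : ∀ j ∈ Finset.Icc 1 (n - i + 1),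
            nubarMap n b i j = ∑ h ∈ Finset.Icc 1 i, b h (i + j - 1) := fun j hj =>
          nubar_eval b h1 h2 (Finset.mem_Icc.mp hj).1 (Finset.mem_Icc.mp hj).2
        simp only [udim]
        rw [Finset.sum_congr rfl e]
        have : ∑ j ∈ Finset.Icc 1 (n - i + 1), ∑ h ∈ Finset.Icc 1 i, b h (i + j - 1)
            = ∑ j ∈ Finset.Icc i n, ∑ h ∈ Finset.Icc 1 i, b h j := by
          refine Finset.sum_nbij' (fun j => i + j - 1) (fun c => c - i + 1) ?_ ?_ ?_ ?_ ?_ <;>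
            simp only [Finset.mem_Icc] <;> intro a ha
          · omega
          · omega
          · omega
          · omega
          · trivial
        rw [this, Finset.sum_comm]
        exact hbsum i h1 h2
    · funext i j
      by_cases h : 1 ≤ i ∧ i ≤ j ∧ j ≤ n
      · simp only [nuMap, if_pos h]
        have hA : nubarMap n b i (j - i + 1) = ∑ h ∈ Finset.Icc 1 i, b h j := by
          rw [nubar_eval b h.1 (by omega) (by omega) (by omega)]
          refine Finset.sum_congr rfl fun h' _ => ?_
          congr 1
          omega
        rcases Nat.lt_or_ge i 2 with hi | hi
        · have hi1 : i = 1 := by omega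
          subst hi1
          have hB : nubarMap n b (1 - 1) (j - 1 + 2) = 0 := by
            simp [nubarMap]
          rw [hA, hB]
          simp
        · have hB : nubarMap n b (i - 1) (j - i + 2) = ∑ h ∈ Finset.Icc 1 (i - 1), b h j := by
            rw [nubar_eval b (by omega) (by omega) (by omega) (by omega)]
            refine Finset.sum_congr rfl fun h' _ => ?_
            congr 1
            omega
          rw [hA, hB]
          rw [show Finset.Icc 1 i = Finset.Icc 1 (i - 1 + 1) by congr 1; omega,
            Finset.sum_Icc_succ_top (by omega), show i - 1 + 1 = i by omega]
          omega
      · simp only [nuMap, if_neg h]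
        exact (hbsupp i j h).symm
end

section
/- The sets P(w) and P(w*) have the same cardinality, where w* = (w_n, ..., w_1) is the reverse of w. -/
open scoped BigOperators Classical

namespace CardPAux

/-- The reversal map on triangular arrays. -/
def psiAux (n : ℕ) (y : ℕ → ℕ → ℕ) (i j : ℕ) : ℕ :=
  ∑ q ∈ Finset.Icc j (i + j - 1), (y (n + 2 - i - j) q - y (n + 1 - i - j) (q + 1))

def psi (n : ℕ) (y : ℕ → ℕ → ℕ) : ℕ → ℕ → ℕ := fun i j =>
  if 1 ≤ i ∧ i ≤ n ∧ 1 ≤ j ∧ j ≤ n - i + 1 then psiAux n y i j else 0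

lemma tele (f : ℕ → ℤ) : ∀ (m a : ℕ),
    ∑ j ∈ Finset.Icc a (a + m), (f j - f (j + 1)) = f a - f (a + m + 1)
  | 0, a => by simp
  | m + 1, a => by
    rw [show a + (m + 1) = (a + m) + 1 from rfl,
      Finset.sum_Icc_succ_top (by omega : a ≤ a + m + 1), tele f m a]
    ring

lemma sum_sub_add {s : Finset ℕ} {x z : ℕ → ℕ} (h : ∀ q ∈ s, z q ≤ x q) :
    ∑ q ∈ s, (x q - z q) + ∑ q ∈ s, z q = ∑ q ∈ s, x q := by
  rw [← Finset.sum_add_distrib]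
  exact Finset.sum_congr rfl fun q hq => Nat.sub_add_cancel (h q hq)

lemma sum_shift (f : ℕ → ℕ) (a b : ℕ) :
    ∑ q ∈ Finset.Icc a b, f (q + 1) = ∑ q ∈ Finset.Icc (a + 1) (b + 1), f q := by
  rw [← Finset.map_add_right_Icc, Finset.sum_map]
  simp [addRightEmbedding_apply]

lemma tri_step (n : ℕ) {y : ℕ → ℕ → ℕ} (hy : IsTri n y) (m b : ℕ) (h1 : 1 ≤ m) (h2 : m ≤ n)
    (h3 : 1 ≤ b) (h4 : b ≤ n - m + 1) : y (m - 1) (b + 1) ≤ y m b := by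
  rcases Nat.lt_or_ge m 2 with hm | hm
  · have hm1 : m = 1 := by omega
    subst hm1
    rw [show (1:ℕ) - 1 = 0 from rfl, hy.1 0 (b + 1) (by omega)]
    exact Nat.zero_le _
  · exact hy.2 m b hm h2 h3 h4

lemma psi_step (n : ℕ) {y : ℕ → ℕ → ℕ} (hy : IsTri n y) (a b : ℕ) (h1 : 1 ≤ a) (h2 : a ≤ n)
    (h3 : 1 ≤ b) (h4 : b ≤ n - a + 1) :
    psi n y a b = psi n y (a - 1) (b + 1) + (y (n + 2 - a - b) b - y (n + 1 - a - b) (b + 1)) := by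
  unfold psi
  rw [if_pos ⟨h1, h2, h3, h4⟩]
  rcases Nat.lt_or_ge a 2 with ha | ha
  · have ha1 : a = 1 := by omega
    subst ha1
    rw [if_neg (by omega)]
    simp [psiAux]
  · rw [if_pos (by omega : 1 ≤ a - 1 ∧ a - 1 ≤ n ∧ 1 ≤ b + 1 ∧ b + 1 ≤ n - (a - 1) + 1)]
    unfold psiAux
    rw [show (a - 1) + (b + 1) - 1 = a + b - 1 from by omega,
      show n + 2 - (a - 1) - (b + 1) = n + 2 - a - b from by omega,
      show n + 1 - (a - 1) - (b + 1) = n + 1 - a - b from by omega,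
      show Finset.Icc b (a + b - 1) = insert b (Finset.Icc (b + 1) (a + b - 1)) from by
        ext x; simp only [Finset.mem_Icc, Finset.mem_insert]; omega,
      Finset.sum_insert (by simp only [Finset.mem_Icc]; omega)]
    ring

lemma psi_isTri (n : ℕ) {y : ℕ → ℕ → ℕ} (hy : IsTri n y) : IsTri n (psi n y) := by
  constructor
  · intro i j h
    simp only [psi, if_neg h]
  · intro i j h2 hn hj1 hj2
    have h := psi_step n hy i j (by omega) hn hj1 hj2
    omega

lemma psi_udim (n : ℕ) {w : ℕ → ℕ} {y : ℕ → ℕ → ℕ} (h : InP n w y) (i : ℕ)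
    (h1 : 1 ≤ i) (h2 : i ≤ n) : udim n (psi n y) i = w (n + 1 - i) := by
  have hy := h.1
  set F : ℕ → ℕ := fun j => ∑ q ∈ Finset.Icc j (i + j - 1), y (n + 2 - i - j) q with hF
  have key : ∀ j, 1 ≤ j → j ≤ n - i + 1 → psi n y i j + F (j + 1) = F j := by
    intro j hj1 hj2
    have hsub : ∀ q ∈ Finset.Icc j (i + j - 1),
        y (n + 1 - i - j) (q + 1) ≤ y (n + 2 - i - j) q := by
      intro q hq
      rw [Finset.mem_Icc] at hq
      have := tri_step n hy (n + 2 - i - j) q (by omega) (by omega) (by omega) (by omega)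
      rwa [show n + 2 - i - j - 1 = n + 1 - i - j from by omega] at this
    have hpsi : psi n y i j = psiAux n y i j := by
      unfold psi; rw [if_pos ⟨h1, h2, hj1, hj2⟩]
    have hFj1 : F (j + 1) = ∑ q ∈ Finset.Icc j (i + j - 1), y (n + 1 - i - j) (q + 1) := by
      simp only [hF]
      rw [sum_shift (y (n + 1 - i - j)) j (i + j - 1),
        show i + (j + 1) - 1 = i + j - 1 + 1 from by omega,
        show n + 2 - i - (j + 1) = n + 1 - i - j from by omega]
    rw [hpsi, hFj1]
    exact sum_sub_add hsub
  have keyZ : ∀ j ∈ Finset.Icc 1 (n - i + 1),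
      ((psi n y i j : ℤ)) = (F j : ℤ) - (F (j + 1) : ℤ) := by
    intro j hj
    rw [Finset.mem_Icc] at hj
    have := key j hj.1 hj.2
    omega
  have hcast : ((udim n (psi n y) i : ℕ) : ℤ) = ((w (n + 1 - i) : ℕ) : ℤ) := by
    have hF1 : F 1 = w (n + 1 - i) := by
      simp only [hF]
      rw [show i + 1 - 1 = i from by omega, show n + 2 - i - 1 = n + 1 - i from by omega,
        ← h.2 (n + 1 - i) (by omega) (by omega)]
      unfold udim
      rw [show n - (n + 1 - i) + 1 = i from by omega]
    have hFtop : F (1 + (n - i) + 1) = 0 := by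
      simp only [hF]
      apply Finset.sum_eq_zero
      intro q hq
      exact hy.1 (n + 2 - i - (1 + (n - i) + 1)) q (by omega)
    unfold udim
    push_cast
    rw [Finset.sum_congr rfl keyZ, show n - i + 1 = 1 + (n - i) from by omega,
      tele (fun j => (F j : ℤ)) (n - i) 1]
    show (F 1 : ℤ) - (F (1 + (n - i) + 1) : ℤ) = (w (n + 1 - i) : ℤ)
    rw [hF1, hFtop]
    simp
  exact_mod_cast hcast

lemma psi_psi (n : ℕ) {y : ℕ → ℕ → ℕ} (hy : IsTri n y) : psi n (psi n y) = y := by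
  funext i j
  by_cases h : 1 ≤ i ∧ i ≤ n ∧ 1 ≤ j ∧ j ≤ n - i + 1
  · obtain ⟨hi1, hi2, hj1, hj2⟩ := h
    have hval : psi n (psi n y) i j = psiAux n (psi n y) i j := by
      unfold psi; rw [if_pos ⟨hi1, hi2, hj1, hj2⟩]
    have keyZ : ∀ q ∈ Finset.Icc j (i + j - 1),
        ((psi n y (n + 2 - i - j) q - psi n y (n + 1 - i - j) (q + 1) : ℕ) : ℤ)
          = ((y (i + j - q) q : ℤ)) - ((y (i + j - (q + 1)) (q + 1) : ℤ)) := by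
      intro q hq
      rw [Finset.mem_Icc] at hq
      have hstep := psi_step n hy (n + 2 - i - j) q (by omega) (by omega) (by omega) (by omega)
      rw [show n + 2 - i - j - 1 = n + 1 - i - j from by omega,
        show n + 2 - (n + 2 - i - j) - q = i + j - q from by omega,
        show n + 1 - (n + 2 - i - j) - q = i + j - (q + 1) from by omega] at hstep
      have hle : y (i + j - (q + 1)) (q + 1) ≤ y (i + j - q) q := by
        have := tri_step n hy (i + j - q) q (by omega) (by omega) (by omega) (by omega)
        rwa [show i + j - q - 1 = i + j - (q + 1) from by omega] at this
      omega
    have hcast : ((psi n (psi n y) i j : ℕ) : ℤ) = ((y i j : ℕ) : ℤ) := by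
      rw [hval]
      unfold psiAux
      push_cast
      rw [Finset.sum_congr rfl keyZ, show i + j - 1 = j + (i - 1) from by omega,
        tele (fun q => (y (i + j - q) q : ℤ)) (i - 1) j]
      show (y (i + j - j) j : ℤ) - (y (i + j - (j + (i - 1) + 1)) (j + (i - 1) + 1) : ℤ)
        = (y i j : ℤ)
      rw [show i + j - j = i from by omega, show j + (i - 1) + 1 = i + j from by omega,
        show i + j - (i + j) = 0 from by omega, hy.1 0 (i + j) (by omega)]
      simp
    exact_mod_cast hcast
  · rw [show psi n (psi n y) i j = 0 from by unfold psi; rw [if_neg h],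
      hy.1 i j h]

lemma psi_inP (n : ℕ) {w : ℕ → ℕ} {y : ℕ → ℕ → ℕ} (h : InP n w y) :
    InP n (fun k => w (n + 1 - k)) (psi n y) :=
  ⟨psi_isTri n h.1, fun i h1 h2 => psi_udim n h i h1 h2⟩

end CardPAux

/-- `P(w)` and `P(w*)` have the same cardinality. -/
theorem card_P_eq_card_P_reverse (n : ℕ) (hn : 1 ≤ n) (w : ℕ → ℕ) :
    Cardinal.mk {y : ℕ → ℕ → ℕ // InP n w y} =
      Cardinal.mk {y : ℕ → ℕ → ℕ // InP n (fun i => w (n + 1 - i)) y} := by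
  apply Cardinal.mk_congr
  refine ⟨fun y => ⟨CardPAux.psi n y.1, CardPAux.psi_inP n y.2⟩,
    fun z => ⟨CardPAux.psi n z.1, ?_⟩, ?_, ?_⟩
  · have h := CardPAux.psi_inP n z.2
    refine ⟨h.1, fun i h1 h2 => ?_⟩
    have := h.2 i h1 h2
    simpa [show n + 1 - (n + 1 - i) = i from by omega] using this
  · intro y
    exact Subtype.ext (CardPAux.psi_psi n y.2.1)
  · intro z
    exact Subtype.ext (CardPAux.psi_psi n z.2.1)
end

section
/- Let Y, Z ∈ P(w) with ν(Y) = (b_{ij}) and ν(Z) = (c_{ij}). Then the condition [for all 1 ≤ ℓ ≤ k ≤ n: Σ_{i=ℓ}^k Σ_{j=k}^n b_{ij} ≥ Σ_{i=ℓ}^k Σ_{j=k}^n c_{ij}] holds if and only if the chutewise dominance condition [for all i, j: Σ_{m=1}^j y_{im} ≥ Σ_{m=1}^j z_{im}] holds. -/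
open scoped BigOperators Classical

section Aux

private lemma tele_aux (S g : ℕ → ℕ) (l : ℕ) : ∀ k, l ≤ k →
    (∀ i, l ≤ i → i ≤ k → S i + g (i - 1) = g i) →
    (∑ i ∈ Finset.Icc l k, S i) + g (l - 1) = g k := by
  intro k
  induction k with
  | zero =>
    intro hl h
    interval_cases l
    simpa using h 0 le_rfl le_rfl
  | succ k ih =>
    intro hl h
    rcases Nat.lt_or_ge l (k + 1) with hlt | hge
    · have hlk : l ≤ k := Nat.lt_succ_iff.mp hlt
      rw [Finset.sum_Icc_succ_top (Nat.le_succ_of_le hlk)]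
      have := ih hlk (fun i hi hik => h i hi (Nat.le_succ_of_le hik))
      have hlast := h (k + 1) (Nat.le_succ_of_le hlk) le_rfl
      simp only [Nat.add_sub_cancel] at hlast
      omega
    · have : l = k + 1 := le_antisymm hl hge
      subst this
      simpa using h (k + 1) le_rfl le_rfl

private lemma shift_sum (f : ℕ → ℕ) (a b c : ℕ) :
    ∑ j ∈ Finset.Icc (a + c) (b + c), f j = ∑ m ∈ Finset.Icc a b, f (m + c) := by
  rw [← Finset.map_add_right_Icc, Finset.sum_map]
  rfl

private lemma inner_aux (n : ℕ) (w : ℕ → ℕ) (y : ℕ → ℕ → ℕ) (hy : InP n w y)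
    (k i : ℕ) (hi1 : 1 ≤ i) (hik : i ≤ k) (hk : k ≤ n) :
    (∑ j ∈ Finset.Icc k n, nuMap n y i j) +
      (∑ m ∈ Finset.Icc (k + 2 - i) (n + 2 - i), y (i - 1) m)
    = ∑ m ∈ Finset.Icc (k + 1 - i) (n + 1 - i), y i m := by
  have h1 : k = (k + 1 - i) + (i - 1) := by omega
  have h2 : n = (n + 1 - i) + (i - 1) := by omega
  have e1 : ∑ j ∈ Finset.Icc k n, nuMap n y i j
      = ∑ m ∈ Finset.Icc (k + 1 - i) (n + 1 - i), nuMap n y i (m + (i - 1)) := by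
    rw [show Finset.Icc k n
        = Finset.Icc ((k + 1 - i) + (i - 1)) ((n + 1 - i) + (i - 1)) by rw [← h1, ← h2],
      shift_sum]
  have e2 : ∀ m ∈ Finset.Icc (k + 1 - i) (n + 1 - i),
      nuMap n y i (m + (i - 1)) = y i m - y (i - 1) (m + 1) := by
    intro m hm
    rw [Finset.mem_Icc] at hm
    have hc : 1 ≤ i ∧ i ≤ m + (i - 1) ∧ m + (i - 1) ≤ n := by omega
    have ha : m + (i - 1) - i + 1 = m := by omega
    have hb : m + (i - 1) - i + 2 = m + 1 := by omega
    rw [nuMap, if_pos hc, ha, hb]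
  have hle : ∀ m ∈ Finset.Icc (k + 1 - i) (n + 1 - i), y (i - 1) (m + 1) ≤ y i m := by
    intro m hm
    rw [Finset.mem_Icc] at hm
    rcases Nat.lt_or_ge i 2 with h2i | h2i
    · have : i = 1 := by omega
      subst this
      rw [hy.1.1 0 (m + 1) (by omega)]
      exact Nat.zero_le _
    · exact hy.1.2 i m h2i (by omega) (by omega) (by omega)
  have e3 : ∑ m ∈ Finset.Icc (k + 2 - i) (n + 2 - i), y (i - 1) m
      = ∑ m ∈ Finset.Icc (k + 1 - i) (n + 1 - i), y (i - 1) (m + 1) := by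
    have h3 : k + 2 - i = (k + 1 - i) + 1 := by omega
    have h4 : n + 2 - i = (n + 1 - i) + 1 := by omega
    rw [h3, h4, shift_sum]
  rw [e1, Finset.sum_congr rfl e2, e3, ← Finset.sum_add_distrib]
  exact Finset.sum_congr rfl fun m hm => Nat.sub_add_cancel (hle m hm)

private lemma key_aux (n : ℕ) (w : ℕ → ℕ) (y : ℕ → ℕ → ℕ) (hy : InP n w y)
    (l k : ℕ) (hl : 1 ≤ l) (hlk : l ≤ k) (hk : k ≤ n) :
    (∑ i ∈ Finset.Icc l k, ∑ j ∈ Finset.Icc k n, nuMap n y i j) + udim n y (l - 1)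
    = w k + ∑ m ∈ Finset.Icc 1 (k - l + 1), y (l - 1) m := by
  set g : ℕ → ℕ := fun i => ∑ m ∈ Finset.Icc (k + 1 - i) (n + 1 - i), y i m with hg
  have htele : (∑ i ∈ Finset.Icc l k, ∑ j ∈ Finset.Icc k n, nuMap n y i j) + g (l - 1)
      = g k := by
    apply tele_aux _ g l k hlk
    intro i hi hik
    have hgi : g (i - 1) = ∑ m ∈ Finset.Icc (k + 2 - i) (n + 2 - i), y (i - 1) m := by
      have h5 : k + 1 - (i - 1) = k + 2 - i := by omega
      have h6 : n + 1 - (i - 1) = n + 2 - i := by omega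
      simp only [hg, h5, h6]
    rw [hgi]
    exact inner_aux n w y hy k i (le_trans hl hi) hik hk
  have hgk : g k = w k := by
    have h7 : k + 1 - k = 1 := by omega
    have h8 : n + 1 - k = n - k + 1 := by omega
    rw [hg]
    simp only [h7, h8]
    exact hy.2 k (le_trans hl hlk) hk
  -- udim n y (l-1) = (∑ m ∈ Icc 1 (k-l+1), y (l-1) m) + g (l-1)
  have hudim : udim n y (l - 1) = (∑ m ∈ Finset.Icc 1 (k - l + 1), y (l - 1) m) + g (l - 1) := by
    have hgl : g (l - 1) = ∑ m ∈ Finset.Icc (k - l + 2) (n - (l - 1) + 1), y (l - 1) m := by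
      have h5 : k + 1 - (l - 1) = k - l + 2 := by omega
      have h6 : n + 1 - (l - 1) = n - (l - 1) + 1 := by omega
      simp only [hg, h5, h6]
    rw [hgl, udim]
    have hsplit : Finset.Icc 1 (n - (l - 1) + 1)
        = Finset.Icc 1 (k - l + 1) ∪ Finset.Icc (k - l + 2) (n - (l - 1) + 1) := by
      ext a
      simp only [Finset.mem_Icc, Finset.mem_union]
      omega
    rw [hsplit, Finset.sum_union]
    rw [Finset.disjoint_left]
    intro a ha hb
    rw [Finset.mem_Icc] at ha hb
    omega
  omega

end Aux

/-- For `Y, Z ∈ P(w)` with `ν(Y) = b`, `ν(Z) = c`, the condition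
`∀ 1 ≤ ℓ ≤ k ≤ n, ∑_{i=ℓ}^k ∑_{j=k}^n b i j ≥ ∑_{i=ℓ}^k ∑_{j=k}^n c i j` holds iff
the chutewise dominance condition `∀ i j, ∑_{m=1}^j y i m ≥ ∑_{m=1}^j z i m` holds. -/


theorem order_condition_iff_chutewise_dominance (n : ℕ) (hn : 1 ≤ n) (w : ℕ → ℕ)
    (y z : ℕ → ℕ → ℕ) (hy : InP n w y) (hz : InP n w z) :
    (∀ l k, 1 ≤ l → l ≤ k → k ≤ n →
        (∑ i ∈ Finset.Icc l k, ∑ j ∈ Finset.Icc k n, nuMap n z i j) ≤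
          ∑ i ∈ Finset.Icc l k, ∑ j ∈ Finset.Icc k n, nuMap n y i j) ↔
    (∀ i j, 1 ≤ i → i ≤ n → 1 ≤ j → j ≤ n - i + 1 →
        (∑ m ∈ Finset.Icc 1 j, z i m) ≤ ∑ m ∈ Finset.Icc 1 j, y i m) := by
  constructor
  · intro hord i j hi hin hj hjn
    rcases Nat.lt_or_ge (n - i) j with htop | hle
    · have hj' : j = n - i + 1 := by omega
      subst hj'
      have h1 := hy.2 i hi hin
      have h2 := hz.2 i hi hin
      rw [udim] at h1 h2
      omega
    · have hS := hord (i + 1) (i + j) (by omega) (by omega) (by omega)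
      have hky := key_aux n w y hy (i + 1) (i + j) (by omega) (by omega) (by omega)
      have hkz := key_aux n w z hz (i + 1) (i + j) (by omega) (by omega) (by omega)
      have he : i + j - (i + 1) + 1 = j := by omega
      have he' : i + 1 - 1 = i := by omega
      rw [he, he'] at hky hkz
      have huy := hy.2 i hi hin
      have huz := hz.2 i hi hin
      omega
  · intro hdom l k hl hlk hk
    have hky := key_aux n w y hy l k hl hlk hk
    have hkz := key_aux n w z hz l k hl hlk hk
    rcases Nat.lt_or_ge l 2 with h1 | h2
    · have hl1 : l = 1 := by omega
      subst hl1
      have h0 : (1 : ℕ) - 1 = 0 := rfl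
      rw [h0] at hky hkz
      have huy0 : udim n y 0 = 0 :=
        Finset.sum_eq_zero fun m _ => hy.1.1 0 m (by omega)
      have huz0 : udim n z 0 = 0 :=
        Finset.sum_eq_zero fun m _ => hz.1.1 0 m (by omega)
      have hsy0 : ∑ m ∈ Finset.Icc 1 (k - 1 + 1), y 0 m = 0 :=
        Finset.sum_eq_zero fun m _ => hy.1.1 0 m (by omega)
      have hsz0 : ∑ m ∈ Finset.Icc 1 (k - 1 + 1), z 0 m = 0 :=
        Finset.sum_eq_zero fun m _ => hz.1.1 0 m (by omega)
      omega
    · have hd := hdom (l - 1) (k - l + 1) (by omega) (by omega) (by omega) (by omega)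
      have huy := hy.2 (l - 1) (by omega) (by omega)
      have huz := hz.2 (l - 1) (by omega) (by omega)
      omega
end

section
/- For any triangular array Y of size n and 1 ≤ i ≤ n, udim(A_i(Y)) = udim(Y) + e_1 + e_2 + ... + e_i. -/
open scoped BigOperators Classical

lemma Kval_le_aux (y : ℕ → ℕ → ℕ) (m k : ℕ) (hk : 1 ≤ k) : Kval y m k ≤ k := by
  unfold Kval
  apply sup_le _ hk
  apply Finset.sup_le
  intro j hj
  simp only [Finset.mem_filter, Finset.mem_Icc] at hj
  exact hj.1.2

lemma one_le_Kval_aux (y : ℕ → ℕ → ℕ) (m k : ℕ) : 1 ≤ Kval y m k := le_sup_right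

lemma udim_Raise_aux (n : ℕ) (y : ℕ → ℕ → ℕ) (m K : ℕ) (h1 : 1 ≤ K) (h2 : K ≤ n - m + 1)
    (c : ℕ) : udim n (Raise y m K) c = udim n y c + if c = m then 1 else 0 := by
  unfold udim Raise
  by_cases hc : c = m
  · subst hc
    rw [if_pos rfl]
    have : ∀ j ∈ Finset.Icc 1 (n - c + 1),
        (if c = c ∧ j = K then y c j + 1 else y c j) = y c j + (if j = K then 1 else 0) := by
      intro j _
      by_cases hj : j = K <;> simp [hj]
    rw [Finset.sum_congr rfl this, Finset.sum_add_distrib,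
      Finset.sum_ite_eq' (Finset.Icc 1 (n - c + 1)) K (fun _ => 1),
      if_pos (Finset.mem_Icc.mpr ⟨h1, h2⟩)]
  · rw [if_neg hc]
    apply Finset.sum_congr rfl
    intro j _
    rw [if_neg (by tauto)]

lemma aStep_iter_aux (n : ℕ) (y : ℕ → ℕ → ℕ) (i : ℕ) (hin : i ≤ n) :
    ∀ t, t ≤ i → (aStep^[t] (y, i, n - i + 1)).2.1 = i - t ∧
      1 ≤ (aStep^[t] (y, i, n - i + 1)).2.2 ∧
      (aStep^[t] (y, i, n - i + 1)).2.2 ≤ n - i + 1 ∧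
      ∀ c, udim n (aStep^[t] (y, i, n - i + 1)).1 c =
        udim n y c + (if i - t < c ∧ c ≤ i then 1 else 0) := by
  intro t
  induction t with
  | zero =>
    intro _
    refine ⟨rfl, by simp, le_refl _, fun c => ?_⟩
    rw [if_neg (by omega)]
    simp
  | succ t ih =>
    intro ht
    obtain ⟨hm, hk1, hk2, hud⟩ := ih (by omega)
    set s := aStep^[t] (y, i, n - i + 1) with hs
    rw [Function.iterate_succ_apply']
    set K := Kval s.1 s.2.1 s.2.2 with hK
    have hK1 : 1 ≤ K := one_le_Kval_aux _ _ _
    have hKle : K ≤ s.2.2 := Kval_le_aux _ _ _ hk1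
    have hstep : aStep s = (Raise s.1 s.2.1 K, s.2.1 - 1, K) := rfl
    rw [hstep]
    refine ⟨by simp [hm]; omega, hK1, le_trans hKle hk2, fun c => ?_⟩
    have hKb : K ≤ n - s.2.1 + 1 := by
      have h5 : K ≤ n - i + 1 := le_trans hKle hk2
      rw [hm]; omega
    rw [udim_Raise_aux n s.1 s.2.1 K hK1 hKb c, hud c, hm]
    split_ifs <;> omega

/-- `udim (A_i Y) = udim Y + e_1 + ⋯ + e_i`. -/
theorem udim_Aproc (n : ℕ) (y : ℕ → ℕ → ℕ) (hy : IsTri n y)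
    (i : ℕ) (hi : 1 ≤ i) (hin : i ≤ n) :
    ∀ k, 1 ≤ k → k ≤ n →
      udim n (Aproc n i y) k = udim n y k + (if k ≤ i then 1 else 0) := by
  intro k hk1 hkn
  obtain ⟨_, _, _, hud⟩ := aStep_iter_aux n y i hin i le_rfl
  have := hud k
  unfold Aproc
  rw [this]
  congr 1
  by_cases h : k ≤ i <;> simp [h] <;> omega
end

section
/- Suppose I(Y,k) < ∞ and let (Y', q) = B(Y,k). Then udim(Y') = udim(Y) - (e_1 + e_2 + ... + e_q). -/
open scoped BigOperators Classical

lemma sum_row_lower (N I : ℕ) (y z : ℕ → ℕ) (hI1 : 1 ≤ I) (hIN : I ≤ N)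
    (hpos : 1 ≤ y I) (hz : ∀ j, z j = if j = I then y I - 1 else y j) :
    (∑ j ∈ Finset.Icc 1 N, z j) + 1 = ∑ j ∈ Finset.Icc 1 N, y j := by
  have hmem : I ∈ Finset.Icc 1 N := Finset.mem_Icc.mpr ⟨hI1, hIN⟩
  rw [← Finset.add_sum_erase _ z hmem, ← Finset.add_sum_erase _ y hmem]
  have h : ∑ j ∈ (Finset.Icc 1 N).erase I, z j = ∑ j ∈ (Finset.Icc 1 N).erase I, y j := by
    refine Finset.sum_congr rfl fun j hj => ?_
    rw [hz, if_neg (Finset.ne_of_mem_erase hj)]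
  rw [h, hz I, if_pos rfl]
  omega

lemma udim_B_aux : ∀ (n : ℕ) (y : ℕ → ℕ → ℕ) (k : ℕ), 1 ≤ k → (Iset n y k).Nonempty →
    ∀ m, 1 ≤ m → m ≤ n →
      udim n (Bproc n y k).1 m + (if m ≤ (Bproc n y k).2 then 1 else 0) = udim n y m := by
  intro n
  induction n with
  | zero => intro y k hk hI m hm1 hm2; omega
  | succ n ih =>
    intro y k hk hI m hm1 hm2
    have hImem : Idef (n + 1) y k ∈ Iset (n + 1) y k := Nat.sInf_mem hI
    obtain ⟨hkI, hIn, hIpos⟩ := hImem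
    by_cases hJ : (Jset (n + 1) y k).Nonempty
    · -- recursive case
      have hJmem : Jdef (n + 1) y k ∈ Jset (n + 1) y k := Nat.sInf_mem hJ
      obtain ⟨hIJ, hJn, hJlt⟩ := hJmem
      have hB : Bproc (n + 1) y k =
          (Lower (adjChute (Bproc n (delChute y) (Jdef (n + 1) y k - 1)).1 (y 1)) 1
            (Idef (n + 1) y k),
           (Bproc n (delChute y) (Jdef (n + 1) y k - 1)).2 + 1) := by
        rw [Bproc, if_pos hJ]
      set j0 := Jdef (n + 1) y k with hj0
      set Z := (Bproc n (delChute y) (j0 - 1)).1 with hZ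
      set r := (Bproc n (delChute y) (j0 - 1)).2 with hr
      have hj02 : 2 ≤ j0 := by omega
      have hI' : (Iset n (delChute y) (j0 - 1)).Nonempty := by
        refine ⟨j0 - 1, le_refl _, by omega, ?_⟩
        show 0 < delChute y 1 (j0 - 1)
        simp only [delChute]
        rw [if_pos ⟨le_refl 1, by omega⟩]
        show 0 < y 2 (j0 - 1)
        omega
      have ihZ := ih (delChute y) (j0 - 1) (by omega) hI'
      rw [hB]
      rcases Nat.lt_or_ge m 2 with hm | hm
      · -- m = 1
        have hm1' : m = 1 := by omega
        subst hm1'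
        rw [if_pos (by omega)]
        have := sum_row_lower (n + 1 - 1 + 1) (Idef (n + 1) y k) (fun j => y 1 j)
          (fun j => Lower (adjChute Z (y 1)) 1 (Idef (n + 1) y k) 1 j)
          (by omega) (by omega) hIpos ?_
        · exact this
        · intro j
          by_cases hje : j = Idef (n + 1) y k
          · subst hje
            simp [Lower, adjChute]
          · simp [Lower, adjChute, hje]
      · -- m ≥ 2
        have hrow : ∀ j, 1 ≤ j →
            Lower (adjChute Z (y 1)) 1 (Idef (n + 1) y k) m j = Z (m - 1) j := by
          intro j hj
          simp only [Lower, adjChute]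
          rw [if_neg (by omega)]
          rw [if_neg (by omega), if_neg (by omega)]
        have h1 : udim (n + 1) (Lower (adjChute Z (y 1)) 1 (Idef (n + 1) y k)) m
            = udim n Z (m - 1) := by
          unfold udim
          rw [show n + 1 - m + 1 = n - (m - 1) + 1 by omega]
          refine Finset.sum_congr rfl fun j hj => ?_
          exact hrow j (Finset.mem_Icc.mp hj).1
        have h2 : udim (n + 1) y m = udim n (delChute y) (m - 1) := by
          unfold udim
          rw [show n + 1 - m + 1 = n - (m - 1) + 1 by omega]
          refine Finset.sum_congr rfl fun j hj => ?_
          have hj1 : 1 ≤ j := (Finset.mem_Icc.mp hj).1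
          simp only [delChute]
          rw [if_pos ⟨by omega, hj1⟩, show m - 1 + 1 = m by omega]
        rw [h1, h2]
        have := ihZ (m - 1) (by omega) (by omega)
        rw [show (if m ≤ r + 1 then (1:ℕ) else 0) = (if m - 1 ≤ r then 1 else 0) by
          by_cases h : m ≤ r + 1
          · rw [if_pos h, if_pos (by omega)]
          · rw [if_neg h, if_neg (by omega)]]
        exact this
    · -- terminal case
      have hB : Bproc (n + 1) y k = (Lower y 1 (Idef (n + 1) y k), 1) := by
        rw [Bproc, if_neg hJ]
      rw [hB]
      rcases Nat.lt_or_ge m 2 with hm | hm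
      · have hm1' : m = 1 := by omega
        subst hm1'
        rw [if_pos le_rfl]
        have := sum_row_lower (n + 1 - 1 + 1) (Idef (n + 1) y k) (fun j => y 1 j)
          (fun j => Lower y 1 (Idef (n + 1) y k) 1 j)
          (by omega) (by omega) hIpos ?_
        · exact this
        · intro j
          by_cases hje : j = Idef (n + 1) y k
          · subst hje; simp [Lower]
          · simp [Lower, hje]
      · rw [if_neg (by omega)]
        unfold udim
        rw [Nat.add_zero]
        refine Finset.sum_congr rfl fun j hj => ?_
        simp only [Lower]
        rw [if_neg (by omega)]

/-- If `I(Y,k) < ∞` and `(Y', q) = B(Y,k)`, then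
`udim Y' = udim Y - (e_1 + ⋯ + e_q)`. -/
theorem udim_Bproc (n : ℕ) (hn : 1 ≤ n) (y : ℕ → ℕ → ℕ) (hy : IsTri n y)
    (k : ℕ) (hk : 1 ≤ k) (hkn : k ≤ n) (hI : (Iset n y k).Nonempty) :
    ∀ m, 1 ≤ m → m ≤ n →
      udim n (Bproc n y k).1 m + (if m ≤ (Bproc n y k).2 then 1 else 0) = udim n y m := by
  intro m hm1 hm2
  exact udim_B_aux n y k hk hI m hm1 hm2
end

section
/- Let (Y', q_1) = B(Y, k) and (Y'', q_2) = B(Y', k') for some k' ≥ k (assuming both applications of B are defined). Then q_1 ≥ q_2. -/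
open scoped BigOperators Classical

section AuxB

/-- An array vanishing on row `0` and column `0`. -/
def VanishArr (y : ℕ → ℕ → ℕ) : Prop := ∀ i j, i = 0 ∨ j = 0 → y i j = 0

lemma vanishArr_delChute (y : ℕ → ℕ → ℕ) : VanishArr (delChute y) := by
  intro i j h
  rcases h with h | h <;> simp [delChute, h]

lemma Bproc_succ_pos (n : ℕ) (y : ℕ → ℕ → ℕ) (k : ℕ) (hJ : (Jset (n+1) y k).Nonempty) :
    Bproc (n+1) y k =
      (Lower (adjChute (Bproc n (delChute y) (Jdef (n+1) y k - 1)).1 (y 1)) 1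
        (Idef (n+1) y k),
       (Bproc n (delChute y) (Jdef (n+1) y k - 1)).2 + 1) := by
  rw [Bproc, if_pos hJ]

lemma Bproc_succ_neg (n : ℕ) (y : ℕ → ℕ → ℕ) (k : ℕ) (hJ : ¬ (Jset (n+1) y k).Nonempty) :
    Bproc (n+1) y k = (Lower y 1 (Idef (n+1) y k), 1) := by
  rw [Bproc, if_neg hJ]

lemma Bproc_snd_pos (n : ℕ) (y : ℕ → ℕ → ℕ) (k : ℕ) : 1 ≤ (Bproc n y k).2 := by
  cases n with
  | zero => simp [Bproc]
  | succ n =>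
    by_cases hJ : (Jset (n+1) y k).Nonempty
    · rw [Bproc_succ_pos n y k hJ]; simp
    · rw [Bproc_succ_neg n y k hJ]

lemma vanishArr_Bproc : ∀ (n : ℕ) (y : ℕ → ℕ → ℕ) (k : ℕ), VanishArr y →
    VanishArr (Bproc n y k).1 := by
  intro n
  induction n with
  | zero => intro y k hV; simpa [Bproc] using hV
  | succ n ih =>
    intro y k hV i j h
    have key : ∀ w : ℕ → ℕ → ℕ, (∀ p q, p = 0 ∨ q = 0 → w p q = 0) → ∀ I,
        Lower w 1 I i j = 0 := by
      intro w hw I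
      simp only [Lower]
      split_ifs
      · simp [hw i j h]
      · exact hw i j h
    by_cases hJ : (Jset (n+1) y k).Nonempty
    · rw [Bproc_succ_pos n y k hJ]
      refine key _ ?_ _
      intro p q hpq
      have hZ := ih (delChute y) (Jdef (n+1) y k - 1) (vanishArr_delChute y)
      simp only [adjChute]
      split_ifs with a b
      · rfl
      · rcases hpq with h' | h'
        · exact absurd h' a
        · subst h'; exact hV 1 0 (Or.inr rfl)
      · rcases hpq with h' | h'
        · exact absurd h' a
        · subst h'; exact hZ (p - 1) 0 (Or.inr rfl)
    · rw [Bproc_succ_neg n y k hJ]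
      exact key y hV _

lemma Bproc_fst_one_le (n : ℕ) (y : ℕ → ℕ → ℕ) (k j : ℕ) :
    (Bproc n y k).1 1 j ≤ y 1 j := by
  cases n with
  | zero => simp [Bproc]
  | succ n =>
    by_cases hJ : (Jset (n+1) y k).Nonempty
    · rw [Bproc_succ_pos n y k hJ]
      simp only [Lower, adjChute]
      split_ifs <;> simp [Nat.sub_le]
    · rw [Bproc_succ_neg n y k hJ]
      simp only [Lower]
      split_ifs <;> simp [Nat.sub_le]

lemma Bproc_fst_one_ne (n : ℕ) (y : ℕ → ℕ → ℕ) (k j : ℕ) (hj : j ≠ Idef n y k) :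
    (Bproc n y k).1 1 j = y 1 j := by
  cases n with
  | zero => simp [Bproc]
  | succ n =>
    by_cases hJ : (Jset (n+1) y k).Nonempty
    · rw [Bproc_succ_pos n y k hJ]
      simp only [Lower, adjChute]
      rw [if_neg (by tauto)]
      simp
    · rw [Bproc_succ_neg n y k hJ]
      simp only [Lower]
      rw [if_neg (by tauto)]

lemma Bproc_fst_two_neg (n : ℕ) (y : ℕ → ℕ → ℕ) (k j : ℕ)
    (hJ : ¬ (Jset (n+1) y k).Nonempty) :
    (Bproc (n+1) y k).1 2 j = y 2 j := by
  rw [Bproc_succ_neg n y k hJ]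
  simp [Lower]

lemma delChute_Bproc_pos (n : ℕ) (y : ℕ → ℕ → ℕ) (k : ℕ) (hV : VanishArr y)
    (hJ : (Jset (n+1) y k).Nonempty) :
    delChute (Bproc (n+1) y k).1 = (Bproc n (delChute y) (Jdef (n+1) y k - 1)).1 := by
  have hZ : VanishArr (Bproc n (delChute y) (Jdef (n+1) y k - 1)).1 :=
    vanishArr_Bproc n _ _ (vanishArr_delChute y)
  funext i j
  rw [Bproc_succ_pos n y k hJ]
  simp only [delChute, Lower, adjChute]
  by_cases hij : 1 ≤ i ∧ 1 ≤ j
  · rw [if_pos hij, if_neg (by omega), if_neg (by omega), if_neg (by omega)]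
    simp
  · rw [if_neg hij]
    have : i = 0 ∨ j = 0 := by omega
    exact (hZ i j this).symm

lemma Bproc_q_aux : ∀ (n : ℕ) (y : ℕ → ℕ → ℕ) (k k' : ℕ), VanishArr y → 1 ≤ k → k ≤ k' →
    (Iset n y k).Nonempty → (Iset n (Bproc n y k).1 k').Nonempty →
    (Bproc n (Bproc n y k).1 k').2 ≤ (Bproc n y k).2 := by
  intro n
  induction n with
  | zero => intro y k k' _ _ _ _ _; simp [Bproc]
  | succ n ih =>
    intro y k k' hV hk hkk' hI hI'
    set Y' := (Bproc (n+1) y k).1 with hY'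
    have hImem := Nat.sInf_mem hI
    set I := Idef (n+1) y k with hIdef
    obtain ⟨hkI, hIn, hIpos⟩ : k ≤ I ∧ I ≤ n+1 ∧ 0 < y 1 I := hImem
    have hI'mem := Nat.sInf_mem hI'
    set I' := Idef (n+1) Y' k' with hI'def
    obtain ⟨hk'I', hI'n, hI'pos⟩ : k' ≤ I' ∧ I' ≤ n+1 ∧ 0 < Y' 1 I' := hI'mem
    have hII' : I ≤ I' := by
      apply Nat.sInf_le
      refine ⟨le_trans hkk' hk'I', hI'n, ?_⟩
      exact lt_of_lt_of_le hI'pos (Bproc_fst_one_le (n+1) y k I')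
    by_cases hJ' : (Jset (n+1) Y' k').Nonempty
    · have hJ'mem := Nat.sInf_mem hJ'
      set j0' := Jdef (n+1) Y' k' with hj0'def
      obtain ⟨hI'j0', hj0'n, hj0'lt⟩ : I' < j0' ∧ j0' ≤ n+1 ∧ Y' 1 j0' < Y' 2 (j0' - 1) :=
        hJ'mem
      by_cases hJ : (Jset (n+1) y k).Nonempty
      · have hJmem := Nat.sInf_mem hJ
        set j0 := Jdef (n+1) y k with hj0def
        obtain ⟨hIj0, hj0n, hj0lt⟩ : I < j0 ∧ j0 ≤ n+1 ∧ y 1 j0 < y 2 (j0 - 1) := hJmem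
        have hDel : delChute Y' = (Bproc n (delChute y) (j0 - 1)).1 :=
          delChute_Bproc_pos n y k hV hJ
        have hY'2 : ∀ j, 1 ≤ j → Y' 2 j = (Bproc n (delChute y) (j0 - 1)).1 1 j := by
          intro j hj
          rw [← hDel]
          simp [delChute, hj]
        -- j0 ≤ j0'
        have hj0le : j0 ≤ j0' := by
          apply Nat.sInf_le
          have hne : j0' ≠ I := by omega
          have h1 : Y' 1 j0' = y 1 j0' := Bproc_fst_one_ne (n+1) y k j0' hne
          have h2 : Y' 2 (j0' - 1) ≤ y 2 (j0' - 1) := by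
            rw [hY'2 (j0' - 1) (by omega)]
            calc (Bproc n (delChute y) (j0 - 1)).1 1 (j0' - 1)
                ≤ delChute y 1 (j0' - 1) := Bproc_fst_one_le n _ _ _
              _ = y 2 (j0' - 1) := by simp [delChute]; omega
          exact ⟨lt_of_le_of_lt hII' hI'j0', hj0'n, by omega⟩
        rw [Bproc_succ_pos n y k hJ]
        rw [Bproc_succ_pos n Y' k' hJ']
        simp only
        rw [hDel, ← hj0'def, ← hj0def]
        have happ := ih (delChute y) (j0 - 1) (j0' - 1) (vanishArr_delChute y)
          (by omega) (by omega)
          ⟨j0 - 1, le_refl _, by omega, by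
            simp only [delChute]
            rw [if_pos ⟨le_refl 1, by omega⟩]
            have h2 : y (1 + 1) (j0 - 1) = y 2 (j0 - 1) := by norm_num
            omega⟩
          ?_
        · omega
        · refine ⟨j0' - 1, le_refl _, by omega, ?_⟩
          rw [← hDel]
          have : delChute Y' 1 (j0' - 1) = Y' 2 (j0' - 1) := by
            simp only [delChute]
            rw [if_pos ⟨le_refl 1, by omega⟩]
          omega
      · -- contradiction: Jset (Y',k') nonempty but Jset (y,k) empty
        exfalso
        apply hJ
        have hne : j0' ≠ I := by omega
        have h1 : Y' 1 j0' = y 1 j0' := Bproc_fst_one_ne (n+1) y k j0' hne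
        have h2 : Y' 2 (j0' - 1) = y 2 (j0' - 1) := Bproc_fst_two_neg n y k _ hJ
        exact ⟨j0', lt_of_le_of_lt hII' hI'j0', hj0'n, by omega⟩
    · rw [Bproc_succ_neg n Y' k' hJ']
      exact Bproc_snd_pos (n+1) y k

end AuxB

/-- If `(Y', q₁) = B(Y,k)` and `(Y'', q₂) = B(Y',k')` with `k' ≥ k`
(both defined), then `q₁ ≥ q₂`. -/
theorem Bproc_q_antitone (n : ℕ) (hn : 1 ≤ n) (y : ℕ → ℕ → ℕ) (hy : IsTri n y)
    (k k' : ℕ) (hk : 1 ≤ k) (hkk' : k ≤ k') (hk'n : k' ≤ n)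
    (hI : (Iset n y k).Nonempty) (hI' : (Iset n (Bproc n y k).1 k').Nonempty) :
    (Bproc n (Bproc n y k).1 k').2 ≤ (Bproc n y k).2 := by
  apply Bproc_q_aux n y k k' _ hk hkk' hI hI'
  intro i j h
  apply hy.1
  rcases h with h | h <;> omega
end

section
/- Suppose I(Y,k) < ∞ and let (Y', q) = B(Y,k). Then applying procedure a exactly q times gives a^q(Y', q, n-q+1) = (Y, 0, I(Y,k)); in particular A_q(Y') = Y. -/
open scoped BigOperators Classical

namespace AStepAux

lemma raise_lower (y : ℕ → ℕ → ℕ) (I : ℕ) (h : 0 < y 1 I) :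
    Raise (Lower y 1 I) 1 I = y := by
  funext p q
  simp only [Raise, Lower]
  by_cases hpq : p = 1 ∧ q = I
  · rw [if_pos hpq, if_pos hpq]
    rw [hpq.1, hpq.2]
    omega
  · rw [if_neg hpq, if_neg hpq]

lemma kval_congr (z w : ℕ → ℕ → ℕ) (i i' k : ℕ)
    (h1 : ∀ j, z i j = w i' j) (h2 : ∀ j, z (i+1) j = w (i'+1) j) :
    Kval z i k = Kval w i' k := by
  unfold Kval
  have hf : (Finset.Icc 2 k).filter (fun j => z i j < z (i+1) (j-1)) =
      (Finset.Icc 2 k).filter (fun j => w i' j < w (i'+1) (j-1)) := by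
    apply Finset.filter_congr
    intro j _
    simp [h1, h2]
  rw [hf]

lemma lower_adj_succ (W : ℕ → ℕ → ℕ) (t : ℕ → ℕ) (I p q : ℕ) (hp : 1 ≤ p) :
    Lower (adjChute W t) 1 I (p+1) q = W p q := by
  simp only [Lower, adjChute]
  have h1 : ¬(p + 1 = 1 ∧ q = I) := by omega
  have h2 : ¬(p + 1 = 0) := by omega
  have h3 : ¬(p + 1 = 1) := by omega
  rw [if_neg h1, if_neg h2, if_neg h3]
  simp

lemma raise_shift (W : ℕ → ℕ → ℕ) (t : ℕ → ℕ) (I i j : ℕ) (hi : 1 ≤ i) :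
    Raise (Lower (adjChute W t) 1 I) (i+1) j = Lower (adjChute (Raise W i j) t) 1 I := by
  funext p q
  simp only [Raise, Lower, adjChute]
  split_ifs <;> first | rfl | omega

lemma shift_iter (t : ℕ → ℕ) (I : ℕ) :
    ∀ (r i m : ℕ) (W : ℕ → ℕ → ℕ), r ≤ i →
      aStep^[r] (Lower (adjChute W t) 1 I, i+1, m) =
        (Lower (adjChute (aStep^[r] (W, i, m)).1 t) 1 I,
         (aStep^[r] (W, i, m)).2.1 + 1, (aStep^[r] (W, i, m)).2.2) := by
  intro r
  induction r with
  | zero => intro i m W _; simp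
  | succ r ih =>
    intro i m W hr
    obtain ⟨i, rfl⟩ : ∃ i', i = i' + 1 := ⟨i - 1, by omega⟩
    rw [Function.iterate_succ_apply, Function.iterate_succ_apply]
    have hK : Kval (Lower (adjChute W t) 1 I) (i+1+1) m = Kval W (i+1) m :=
      kval_congr _ _ _ _ _ (fun j => lower_adj_succ W t I (i+1) j (by omega))
        (fun j => lower_adj_succ W t I (i+1+1) j (by omega))
    have hstep : aStep (Lower (adjChute W t) 1 I, i+1+1, m) =
        (Lower (adjChute (Raise W (i+1) (Kval W (i+1) m)) t) 1 I, i+1,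
          Kval W (i+1) m) := by
      simp only [aStep, hK, Nat.add_sub_cancel]
      rw [raise_shift W t I (i+1) _ (by omega)]
    have hstep' : aStep (W, i+1, m) = (Raise W (i+1) (Kval W (i+1) m), i, Kval W (i+1) m) := by
      simp [aStep]
    rw [hstep, hstep', ih i _ _ (by omega)]

lemma lower_self (y : ℕ → ℕ → ℕ) (I : ℕ) : Lower y 1 I 1 I = y 1 I - 1 := by
  simp [Lower]

lemma lower_of_ne (y : ℕ → ℕ → ℕ) (I p q : ℕ) (h : ¬(p = 1 ∧ q = I)) :
    Lower y 1 I p q = y p q := by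
  simp only [Lower]
  rw [if_neg h]

lemma kval_eq (z : ℕ → ℕ → ℕ) (b I : ℕ) (hI : 1 ≤ I)
    (h1 : 2 ≤ I → I ≤ b ∧ z 1 I < z 2 (I-1))
    (h2 : ∀ j, 2 ≤ j → j ≤ b → z 1 j < z 2 (j-1) → j ≤ I) :
    Kval z 1 b = I := by
  unfold Kval
  have hsup : ((Finset.Icc 2 b).filter (fun j => z 1 j < z 2 (j-1))).sup id ≤ I := by
    apply Finset.sup_le
    intro j hj
    simp only [Finset.mem_filter, Finset.mem_Icc] at hj
    exact h2 j hj.1.1 hj.1.2 hj.2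
  rcases Nat.lt_or_ge I 2 with h | h
  · have hI1 : I = 1 := by omega
    subst hI1
    exact sup_eq_right.mpr hsup
  · obtain ⟨hIb, hzI⟩ := h1 h
    have hmem : I ∈ (Finset.Icc 2 b).filter (fun j => z 1 j < z 2 (j-1)) := by
      simp only [Finset.mem_filter, Finset.mem_Icc]
      exact ⟨⟨h, hIb⟩, hzI⟩
    have hle := Finset.le_sup (f := id) hmem
    have hs : ((Finset.Icc 2 b).filter (fun j => z 1 j < z 2 (j-1))).sup id = I :=
      le_antisymm hsup hle
    rw [hs]
    exact sup_eq_left.mpr hI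

lemma adj_del (n : ℕ) (y : ℕ → ℕ → ℕ) (hy : IsTri n y) :
    adjChute (delChute y) (y 1) = y := by
  funext p q
  simp only [adjChute, delChute]
  by_cases hp0 : p = 0
  · subst hp0
    rw [if_pos rfl]
    exact (hy.1 0 q (by omega)).symm
  by_cases hp1 : p = 1
  · subst hp1
    rw [if_neg one_ne_zero, if_pos rfl]
  · rw [if_neg hp0, if_neg hp1]
    by_cases hq : 1 ≤ p - 1 ∧ 1 ≤ q
    · rw [if_pos hq]
      congr 1
      omega
    · rw [if_neg hq]
      exact (hy.1 p q (by omega)).symm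

lemma isTri_del (n : ℕ) (y : ℕ → ℕ → ℕ) (hy : IsTri (n+1) y) : IsTri n (delChute y) := by
  constructor
  · intro i j h
    simp only [delChute]
    by_cases hij : 1 ≤ i ∧ 1 ≤ j
    · rw [if_pos hij]
      exact hy.1 (i+1) j (by omega)
    · rw [if_neg hij]
  · intro i j h2 hin h1 hj
    simp only [delChute]
    rw [if_pos (⟨by omega, by omega⟩ : 1 ≤ i - 1 ∧ 1 ≤ j + 1),
      if_pos (⟨by omega, by omega⟩ : 1 ≤ i ∧ 1 ≤ j)]
    have hii : i - 1 + 1 = i := by omega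
    rw [hii]
    have := hy.2 (i+1) j (by omega) (by omega) h1 (by omega)
    simpa using this

theorem core : ∀ (n : ℕ) (y : ℕ → ℕ → ℕ), IsTri n y → ∀ k, 1 ≤ k → k ≤ n →
    (Iset n y k).Nonempty →
    aStep^[(Bproc n y k).2] ((Bproc n y k).1, (Bproc n y k).2, n - (Bproc n y k).2 + 1)
      = (y, 0, Idef n y k) := by
  intro n
  induction n with
  | zero => intro y _ k hk hkn _; omega
  | succ m ih =>
    intro y hy k hk hkn hI
    have hImem : Idef (m+1) y k ∈ Iset (m+1) y k := Nat.sInf_mem hI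
    obtain ⟨hkI, hIn, hIpos⟩ := hImem
    by_cases hJ : (Jset (m+1) y k).Nonempty
    · -- inductive case
      have hj0mem : Jdef (m+1) y k ∈ Jset (m+1) y k := Nat.sInf_mem hJ
      obtain ⟨hIj0, hj0n, hj0lt⟩ := hj0mem
      have hj02 : 2 ≤ Jdef (m+1) y k := by omega
      have hm1 : 1 ≤ m := by omega
      have htri : IsTri m (delChute y) := isTri_del m y hy
      have hd : 0 < delChute y 1 (Jdef (m+1) y k - 1) := by
        simp only [delChute]
        rw [if_pos (⟨le_refl 1, by omega⟩ : 1 ≤ 1 ∧ 1 ≤ Jdef (m+1) y k - 1)]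
        show 0 < y 2 (Jdef (m+1) y k - 1)
        omega
      have hmemI1 : Jdef (m+1) y k - 1 ∈ Iset m (delChute y) (Jdef (m+1) y k - 1) :=
        ⟨le_refl _, by omega, hd⟩
      have hIsetne : (Iset m (delChute y) (Jdef (m+1) y k - 1)).Nonempty := ⟨_, hmemI1⟩
      have hI1mem := Nat.sInf_mem hIsetne
      have hI1le : Idef m (delChute y) (Jdef (m+1) y k - 1) ≤ Jdef (m+1) y k - 1 :=
        Nat.sInf_le hmemI1
      have hI1 : Idef m (delChute y) (Jdef (m+1) y k - 1) = Jdef (m+1) y k - 1 :=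
        le_antisymm hI1le hI1mem.1
      have ihres := ih (delChute y) htri (Jdef (m+1) y k - 1) (by omega) (by omega) hIsetne
      have hB : Bproc (m+1) y k =
          (Lower (adjChute (Bproc m (delChute y) (Jdef (m+1) y k - 1)).1 (y 1)) 1
              (Idef (m+1) y k),
           (Bproc m (delChute y) (Jdef (m+1) y k - 1)).2 + 1) := by
        simp only [Bproc]
        rw [if_pos hJ]
      rw [hB]
      set Z := (Bproc m (delChute y) (Jdef (m+1) y k - 1)).1 with hZ
      set r := (Bproc m (delChute y) (Jdef (m+1) y k - 1)).2 with hr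
      show aStep^[r+1]
          (Lower (adjChute Z (y 1)) 1 (Idef (m+1) y k), r + 1, m + 1 - (r+1) + 1)
          = (y, 0, Idef (m+1) y k)
      have hsub : m + 1 - (r+1) + 1 = m - r + 1 := by omega
      rw [hsub, Function.iterate_succ_apply',
        shift_iter (y 1) (Idef (m+1) y k) r r (m - r + 1) Z (le_refl r), ihres,
        adj_del (m+1) y hy]
      have hK : Kval (Lower y 1 (Idef (m+1) y k)) 1
          (Idef m (delChute y) (Jdef (m+1) y k - 1)) = Idef (m+1) y k := by
        apply kval_eq _ _ _ (by omega)
        · intro h2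
          constructor
          · omega
          · have hle : y 1 (Idef (m+1) y k) ≤ y 2 (Idef (m+1) y k - 1) := by
              have := hy.2 2 (Idef (m+1) y k - 1) (le_refl 2) (by omega) (by omega) (by omega)
              have hii : Idef (m+1) y k - 1 + 1 = Idef (m+1) y k := by omega
              rwa [hii] at this
            have hL1 : Lower y 1 (Idef (m+1) y k) 1 (Idef (m+1) y k)
                = y 1 (Idef (m+1) y k) - 1 := lower_self y _
            have hL2 : Lower y 1 (Idef (m+1) y k) 2 (Idef (m+1) y k - 1)
                = y 2 (Idef (m+1) y k - 1) := lower_of_ne y _ _ _ (by omega)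
            rw [hL1, hL2]
            omega
        · intro j hj2 hjb hlt
          by_contra hgt
          push_neg at hgt
          have hjI : j ≠ Idef (m+1) y k := by omega
          have hL1 : Lower y 1 (Idef (m+1) y k) 1 j = y 1 j :=
            lower_of_ne y _ _ _ (by omega)
          have hL2 : Lower y 1 (Idef (m+1) y k) 2 (j-1) = y 2 (j-1) :=
            lower_of_ne y _ _ _ (by omega)
          rw [hL1, hL2] at hlt
          have hmemJ : j ∈ Jset (m+1) y k := ⟨by omega, by omega, hlt⟩
          have hcon : Jdef (m+1) y k ≤ j := Nat.sInf_le hmemJ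
          omega
      show (Raise (Lower y 1 (Idef (m+1) y k)) 1
            (Kval (Lower y 1 (Idef (m+1) y k)) 1 (Idef m (delChute y) (Jdef (m+1) y k - 1))),
          1 - 1,
          Kval (Lower y 1 (Idef (m+1) y k)) 1 (Idef m (delChute y) (Jdef (m+1) y k - 1)))
          = (y, 0, Idef (m+1) y k)
      rw [hK, raise_lower y _ hIpos]
    · -- base case: Jset empty
      have hB : Bproc (m+1) y k = (Lower y 1 (Idef (m+1) y k), 1) := by
        simp only [Bproc]
        rw [if_neg hJ]
      rw [hB]
      show aStep (Lower y 1 (Idef (m+1) y k), 1, m + 1 - 1 + 1) = (y, 0, Idef (m+1) y k)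
      have hm : m + 1 - 1 + 1 = m + 1 := by omega
      rw [hm]
      have hK : Kval (Lower y 1 (Idef (m+1) y k)) 1 (m+1) = Idef (m+1) y k := by
        apply kval_eq _ _ _ (by omega)
        · intro h2
          constructor
          · omega
          · have hle : y 1 (Idef (m+1) y k) ≤ y 2 (Idef (m+1) y k - 1) := by
              have := hy.2 2 (Idef (m+1) y k - 1) (le_refl 2) (by omega) (by omega) (by omega)
              have hii : Idef (m+1) y k - 1 + 1 = Idef (m+1) y k := by omega
              rwa [hii] at this
            have hL1 : Lower y 1 (Idef (m+1) y k) 1 (Idef (m+1) y k)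
                = y 1 (Idef (m+1) y k) - 1 := lower_self y _
            have hL2 : Lower y 1 (Idef (m+1) y k) 2 (Idef (m+1) y k - 1)
                = y 2 (Idef (m+1) y k - 1) := lower_of_ne y _ _ _ (by omega)
            rw [hL1, hL2]
            omega
        · intro j hj2 hjb hlt
          by_contra hgt
          push_neg at hgt
          have hL1 : Lower y 1 (Idef (m+1) y k) 1 j = y 1 j :=
            lower_of_ne y _ _ _ (by omega)
          have hL2 : Lower y 1 (Idef (m+1) y k) 2 (j-1) = y 2 (j-1) :=
            lower_of_ne y _ _ _ (by omega)
          rw [hL1, hL2] at hlt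
          exact hJ ⟨j, by omega, hjb, hlt⟩
      show (Raise (Lower y 1 (Idef (m+1) y k)) 1 (Kval (Lower y 1 (Idef (m+1) y k)) 1 (m+1)),
          1 - 1, Kval (Lower y 1 (Idef (m+1) y k)) 1 (m+1)) = (y, 0, Idef (m+1) y k)
      rw [hK, raise_lower y _ hIpos]

end AStepAux

/-- If `I(Y,k) < ∞` and `(Y', q) = B(Y,k)`, then
`a^q(Y', q, n - q + 1) = (Y, 0, I(Y,k))`; in particular `A_q(Y') = Y`. -/
theorem aStep_iterate_Bproc (n : ℕ) (hn : 1 ≤ n) (y : ℕ → ℕ → ℕ) (hy : IsTri n y)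
    (k : ℕ) (hk : 1 ≤ k) (hkn : k ≤ n) (hI : (Iset n y k).Nonempty) :
    aStep^[(Bproc n y k).2] ((Bproc n y k).1, (Bproc n y k).2, n - (Bproc n y k).2 + 1) =
        (y, 0, Idef n y k) ∧
      Aproc n (Bproc n y k).2 (Bproc n y k).1 = y := by
  have h := AStepAux.core n y hy k hk hkn hI
  refine ⟨h, ?_⟩
  unfold Aproc
  rw [h]
end

section
/- For i > 1, procedure a commutes with deletion of the top chute in the following sense: if a(Y,i,k) = (X, i-1, k') and a(Del↘(Y), i-1, k) = (X', i-2, k''), then X = X' ∪↘ Top(Y) and k' = k''. -/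
open scoped BigOperators Classical

/-- For `i > 1`, procedure `a` commutes with deletion of the top chute:
if `a(Y,i,k) = (X, i-1, k')` and `a(Del↘Y, i-1, k) = (X', i-2, k'')`, then
`X = X' ∪↘ Top(Y)` and `k' = k''`. -/
theorem aStep_delChute_commute (n : ℕ) (y : ℕ → ℕ → ℕ) (hy : IsTri n y)
    (i k : ℕ) (hi : 2 ≤ i) (hik : i ≤ n - k + 1) :
    (aStep (y, i, k)).1 = adjChute (aStep (delChute y, i - 1, k)).1 (y 1) ∧
      (aStep (y, i, k)).2.2 = (aStep (delChute y, i - 1, k)).2.2 := by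
  have hK : Kval (delChute y) (i - 1) k = Kval y i k := by
    have hfilter : ((Finset.Icc 2 k).filter
        (fun j => delChute y (i - 1) j < delChute y (i - 1 + 1) (j - 1))) =
        ((Finset.Icc 2 k).filter (fun j => y i j < y (i + 1) (j - 1))) := by
      apply Finset.filter_congr
      intro j hj
      simp only [Finset.mem_Icc] at hj
      have h2j : 2 ≤ j := hj.1
      have hi1 : i - 1 + 1 = i := by omega
      have h1 : delChute y (i - 1) j = y i j := by
        simp only [delChute]
        rw [if_pos ⟨by omega, by omega⟩, hi1]
      have h2 : delChute y (i - 1 + 1) (j - 1) = y (i + 1) (j - 1) := by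
        simp only [delChute]
        rw [if_pos ⟨by omega, by omega⟩, hi1]
      rw [h1, h2]
    simp only [Kval, hfilter]
  have hK1 : 1 ≤ Kval y i k := by simp [Kval]
  constructor
  · simp only [aStep, hK]
    funext p q
    simp only [Raise, adjChute]
    by_cases hp0 : p = 0
    · subst hp0
      rw [if_pos rfl, if_neg (by omega : ¬(0 = i ∧ q = Kval y i k))]
      exact hy.1 0 q (by omega)
    · rw [if_neg hp0]
      by_cases hp1 : p = 1
      · subst hp1
        rw [if_pos rfl, if_neg (by omega : ¬(1 = i ∧ q = Kval y i k))]
      · rw [if_neg hp1]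
        have hp2 : 2 ≤ p := by omega
        by_cases hq0 : q = 0
        · subst hq0
          rw [if_neg (by omega : ¬(p = i ∧ 0 = Kval y i k)),
            if_neg (by omega : ¬(p - 1 = i - 1 ∧ 0 = Kval y i k))]
          simp only [delChute]
          rw [if_neg (by omega)]
          exact hy.1 p 0 (by omega)
        · have hq1 : 1 ≤ q := by omega
          have hd : delChute y (p - 1) q = y p q := by
            simp only [delChute]
            rw [if_pos ⟨by omega, by omega⟩]
            congr 1; omega
          by_cases hpi : p = i ∧ q = Kval y i k
          · rw [if_pos hpi, if_pos ⟨by omega, hpi.2⟩, hd]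
          · rw [if_neg hpi, if_neg (by omega : ¬(p - 1 = i - 1 ∧ q = Kval y i k)), hd]
  · simp only [aStep, hK]
end
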